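/- If K is a transitive permutation group on a set Ω containing a regular subgroup G, and S is the set of orbits of the point stabilizer K_α on Ω identified with G (via g ↦ α·g), then S is a partition of G with {1} ∈ S and X⁻¹ ∈ S for every X ∈ S, and the ℤ-span of the elements ∑_{x∈X} x (X ∈ S) in the group ring ℤG is closed under multiplication (i.e., forms a Schur ring over G). -/

import Mathlib

open scoped Classical

set_option linter.unusedSectionVars false

namespace SchurAux

open MulAction

variable {K Ω : Type*} [Group K] [Fintype K] [MulAction K Ω] {G : Subgroup K} {α : Ω}

def Yset (G : Subgroup K) (α ω : Ω) : Set G :=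
  {g : G | (g : K) • α ∈ MulAction.orbit (MulAction.stabilizer K α) ω}

theorem uniq (hreg : ∀ x y : Ω, ∃! g : G, (g : K) • x = y) {g g' : G}
    (h : (g : K) • α = (g' : K) • α) : g = g' :=
  (hreg α ((g' : K) • α)).unique h rfl

theorem orbit_smul_mem {k : K} (hk : k ∈ MulAction.stabilizer K α) {x ω : Ω}
    (hx : x ∈ MulAction.orbit (MulAction.stabilizer K α) ω) :
    k • x ∈ MulAction.orbit (MulAction.stabilizer K α) ω := by
  obtain ⟨h, rfl⟩ := hx
  exact ⟨(⟨k, hk⟩ : MulAction.stabilizer K α) * h, by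
    simp [Subgroup.smul_def, mul_smul]⟩

theorem mem_Yset_self (g : G) : g ∈ Yset G α ((g : K) • α) :=
  MulAction.mem_orbit_self _

theorem class_eq {g : G} {ω : Ω} (hg : g ∈ Yset G α ω) :
    Yset G α ((g : K) • α) = Yset G α ω := by
  have horb : MulAction.orbit (MulAction.stabilizer K α) ((g : K) • α)
      = MulAction.orbit (MulAction.stabilizer K α) ω := MulAction.orbit_eq_iff.mpr hg
  ext h
  simp only [Yset, Set.mem_setOf_eq, horb]

theorem mem_Yset_iff (h g : G) :
    g ∈ Yset G α ((h : K) • α) ↔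
      ∃ k₁ ∈ MulAction.stabilizer K α, ∃ k₂ ∈ MulAction.stabilizer K α,
        (g : K) = k₁ * (h : K) * k₂ := by
  constructor
  · rintro ⟨k, hkeq⟩
    have hm : ((g : K)⁻¹ * (k : K) * (h : K)) ∈ MulAction.stabilizer K α := by
      have hkeq' : (k : K) • ((h : K) • α) = (g : K) • α := hkeq
      rw [MulAction.mem_stabilizer_iff, mul_smul, mul_smul, hkeq', inv_smul_smul]
    refine ⟨k, k.2, ((g : K)⁻¹ * (k : K) * (h : K))⁻¹, inv_mem hm, ?_⟩
    group
  · rintro ⟨k₁, hk₁, k₂, hk₂, hg⟩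
    refine ⟨⟨k₁, hk₁⟩, ?_⟩
    show k₁ • ((h : K) • α) = (g : K) • α
    rw [hg, mul_smul, mul_smul, MulAction.mem_stabilizer_iff.mp hk₂]

theorem Yset_inv (h : G) :
    (Yset G α ((h : K) • α))⁻¹ = Yset G α (((h⁻¹ : G) : K) • α) := by
  ext g
  rw [Set.mem_inv, mem_Yset_iff, mem_Yset_iff]
  constructor
  · rintro ⟨k₁, hk₁, k₂, hk₂, e⟩
    refine ⟨k₂⁻¹, inv_mem hk₂, k₁⁻¹, inv_mem hk₁, ?_⟩
    have : ((g : K))⁻¹ = k₁ * (h : K) * k₂ := by rw [← e]; rfl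
    push_cast
    rw [← inv_inv (g : K), this]
    group
  · rintro ⟨k₁, hk₁, k₂, hk₂, e⟩
    refine ⟨k₂⁻¹, inv_mem hk₂, k₁⁻¹, inv_mem hk₁, ?_⟩
    have e' : (g : K) = k₁ * ((h : K))⁻¹ * k₂ := by push_cast at e; exact e
    show ((g : K))⁻¹ = _
    rw [e']
    group

noncomputable def sigma (hreg : ∀ x y : Ω, ∃! g : G, (g : K) • x = y) (α : Ω)
    (k : K) (g : G) : G :=
  (hreg α (k • ((g : K) • α))).exists.choose

theorem sigma_spec (hreg : ∀ x y : Ω, ∃! g : G, (g : K) • x = y) (k : K) (g : G) :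
    ((sigma hreg α k g : G) : K) • α = k • ((g : K) • α) :=
  (hreg α (k • ((g : K) • α))).exists.choose_spec

theorem sigma_inv_sigma (hreg : ∀ x y : Ω, ∃! g : G, (g : K) • x = y) (k : K) (g : G) :
    sigma hreg α k⁻¹ (sigma hreg α k g) = g := by
  apply uniq hreg
  rw [sigma_spec, sigma_spec, inv_smul_smul]

theorem sigma_sigma_inv (hreg : ∀ x y : Ω, ∃! g : G, (g : K) • x = y) (k : K) (g : G) :
    sigma hreg α k (sigma hreg α k⁻¹ g) = g := by
  apply uniq hreg
  rw [sigma_spec, sigma_spec, smul_inv_smul]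

theorem sigma_mem (hreg : ∀ x y : Ω, ∃! g : G, (g : K) • x = y) {k : K}
    (hk : k ∈ MulAction.stabilizer K α) {g : G} {ω : Ω} (hg : g ∈ Yset G α ω) :
    sigma hreg α k g ∈ Yset G α ω := by
  have h2 : ((sigma hreg α k g : G) : K) • α
      ∈ MulAction.orbit (MulAction.stabilizer K α) ω := by
    rw [sigma_spec]
    exact orbit_smul_mem hk hg
  exact h2


theorem maps_step (hreg : ∀ x y : Ω, ∃! g : G, (g : K) • x = y)
    {X Y : Set G} (hX : ∃ ω, X = Yset G α ω) (hY : ∃ ω, Y = Yset G α ω)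
    {g g' : G} {k : K} (hk : k ∈ MulAction.stabilizer K α)
    (hkg : k • ((g : K) • α) = (g' : K) • α)
    {x y : G} (hx : x ∈ X) (hy : y ∈ Y) (hxy : x * y = g) :
    sigma hreg α k x ∈ X ∧ (sigma hreg α k x)⁻¹ * g' ∈ Y ∧
      sigma hreg α k x * ((sigma hreg α k x)⁻¹ * g') = g' := by
  obtain ⟨ω, rfl⟩ := hX
  obtain ⟨ω', rfl⟩ := hY
  refine ⟨sigma_mem hreg hk hx, ?_, by group⟩
  set s := sigma hreg α k x with hs_def
  have hs : ((s : G) : K) • α = k • ((x : K) • α) := sigma_spec hreg k x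
  have hk' : ((s : K)⁻¹ * k * (x : K)) ∈ MulAction.stabilizer K α := by
    rw [MulAction.mem_stabilizer_iff, mul_smul, mul_smul, ← hs, inv_smul_smul]
  have hcalc : (((s⁻¹ * g' : G) : K)) • α = ((s : K)⁻¹ * k * (x : K)) • ((y : K) • α) := by
    push_cast
    rw [mul_smul, mul_smul, mul_smul]
    congr 1
    rw [← hkg]
    congr 1
    rw [← mul_smul, ← Subgroup.coe_mul, hxy]
  have h2 : (((s⁻¹ * g' : G) : K)) • α ∈ MulAction.orbit (MulAction.stabilizer K α) ω' := by
    rw [hcalc]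
    exact orbit_smul_mem hk' hy
  exact h2

theorem card_fiber_eq (hreg : ∀ x y : Ω, ∃! g : G, (g : K) • x = y)
    {X Y : Set G} (hX : ∃ ω, X = Yset G α ω) (hY : ∃ ω, Y = Yset G α ω)
    {g g' : G} {k : K} (hk : k ∈ MulAction.stabilizer K α)
    (hkg : k • ((g : K) • α) = (g' : K) • α) :
    ((X.toFinset ×ˢ Y.toFinset).filter fun p => p.1 * p.2 = g).card
      = ((X.toFinset ×ˢ Y.toFinset).filter fun p => p.1 * p.2 = g').card := by
  have hkg' : k⁻¹ • ((g' : K) • α) = (g : K) • α := by rw [← hkg, inv_smul_smul]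
  refine Finset.card_bij'
    (fun p _ => (sigma hreg α k p.1, (sigma hreg α k p.1)⁻¹ * g'))
    (fun p _ => (sigma hreg α k⁻¹ p.1, (sigma hreg α k⁻¹ p.1)⁻¹ * g)) ?_ ?_ ?_ ?_
  · rintro ⟨x, y⟩ hp
    simp only [Finset.mem_filter, Finset.mem_product, Set.mem_toFinset] at hp ⊢
    obtain ⟨⟨hx, hy⟩, hxy⟩ := hp
    obtain ⟨h1, h2, h3⟩ := maps_step hreg hX hY hk hkg hx hy hxy
    exact ⟨⟨h1, h2⟩, h3⟩
  · rintro ⟨x, y⟩ hp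
    simp only [Finset.mem_filter, Finset.mem_product, Set.mem_toFinset] at hp ⊢
    obtain ⟨⟨hx, hy⟩, hxy⟩ := hp
    obtain ⟨h1, h2, h3⟩ := maps_step hreg hX hY (inv_mem hk) hkg' hx hy hxy
    exact ⟨⟨h1, h2⟩, h3⟩
  · rintro ⟨x, y⟩ hp
    simp only [Finset.mem_filter, Finset.mem_product, Set.mem_toFinset] at hp
    obtain ⟨⟨hx, hy⟩, hxy⟩ := hp
    have h1 : sigma hreg α k⁻¹ (sigma hreg α k x) = x := sigma_inv_sigma hreg k x
    refine Prod.ext h1 ?_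
    show (sigma hreg α k⁻¹ (sigma hreg α k x))⁻¹ * g = y
    rw [h1, ← hxy]; group
  · rintro ⟨x, y⟩ hp
    simp only [Finset.mem_filter, Finset.mem_product, Set.mem_toFinset] at hp
    obtain ⟨⟨hx, hy⟩, hxy⟩ := hp
    have h1 : sigma hreg α k (sigma hreg α k⁻¹ x) = x := sigma_sigma_inv hreg k x
    refine Prod.ext h1 ?_
    show (sigma hreg α k (sigma hreg α k⁻¹ x))⁻¹ * g' = y
    rw [h1, ← hxy]; group

end SchurAux

/-- Schur's theorem (1933): the orbits of a point stabilizer of a transitive group `K`,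
transported to a regular subgroup `G` via `g ↦ g • α`, form an inverse-closed partition of `G`
containing `{1}` whose simple quantities span a `ℤ`-submodule of the group ring `ℤ[G]` that is
closed under multiplication (a Schur ring over `G`). -/
theorem stmt_15 {K Ω : Type*} [Group K] [Fintype K] [MulAction K Ω]
    (htrans : MulAction.IsPretransitive K Ω)
    (G : Subgroup K)
    (hreg : ∀ x y : Ω, ∃! g : G, (g : K) • x = y)
    (α : Ω)
    (S : Set (Set G))
    (hS : S = {Y | ∃ ω : Ω,
      Y = {g : G | (g : K) • α ∈ MulAction.orbit (MulAction.stabilizer K α) ω}}) :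
    ({(1 : G)} : Set G) ∈ S ∧
    (∀ X ∈ S, X⁻¹ ∈ S) ∧
    (∀ g : G, ∃! X, X ∈ S ∧ g ∈ X) ∧
    (∀ a ∈ Submodule.span ℤ {v : MonoidAlgebra ℤ G |
        ∃ X ∈ S, v = ∑ x ∈ X.toFinset, MonoidAlgebra.single x (1 : ℤ)},
      ∀ b ∈ Submodule.span ℤ {v : MonoidAlgebra ℤ G |
        ∃ X ∈ S, v = ∑ x ∈ X.toFinset, MonoidAlgebra.single x (1 : ℤ)},
      a * b ∈ Submodule.span ℤ {v : MonoidAlgebra ℤ G |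
        ∃ X ∈ S, v = ∑ x ∈ X.toFinset, MonoidAlgebra.single x (1 : ℤ)}) := by
  subst hS
  refine ⟨?_, ?_, ?_, ?_⟩
  · -- {1} ∈ S
    refine ⟨α, ?_⟩
    ext g
    simp only [Set.mem_singleton_iff, Set.mem_setOf_eq]
    constructor
    · rintro rfl
      exact ⟨1, by simp⟩
    · rintro ⟨kk, hkk⟩
      have h1 : (kk : K) • α = (g : K) • α := hkk
      have h2 : (g : K) • α = ((1 : G) : K) • α := by
        rw [← h1, MulAction.mem_stabilizer_iff.mp kk.2]
        simp
      exact SchurAux.uniq hreg h2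
  · -- inverse closed
    rintro X ⟨ω, rfl⟩
    obtain ⟨h, hh, -⟩ := hreg α ω
    refine ⟨((h⁻¹ : G) : K) • α, ?_⟩
    rw [← hh]
    exact SchurAux.Yset_inv h
  · -- partition
    intro g
    refine ⟨{g' : G | (g' : K) • α ∈
        MulAction.orbit (MulAction.stabilizer K α) ((g : K) • α)},
      ⟨⟨(g : K) • α, rfl⟩, SchurAux.mem_Yset_self g⟩, ?_⟩
    rintro X ⟨⟨ω, rfl⟩, hgX⟩
    exact (SchurAux.class_eq hgX).symm
  · -- Schur ring property
    intro a ha b hb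
    set gens : Set (MonoidAlgebra ℤ G) := {v : MonoidAlgebra ℤ G |
        ∃ X ∈ {Y : Set G | ∃ ω : Ω,
          Y = {g : G | (g : K) • α ∈ MulAction.orbit (MulAction.stabilizer K α) ω}},
        v = ∑ x ∈ X.toFinset, MonoidAlgebra.single x (1 : ℤ)} with hgens
    have key : ∀ v ∈ gens, ∀ w ∈ gens, v * w ∈ Submodule.span ℤ gens := by
      rintro v ⟨X, hX, rfl⟩ w ⟨Y, hY, rfl⟩
      have hX' : ∃ ω, X = SchurAux.Yset G α ω := hX
      have hY' : ∃ ω, Y = SchurAux.Yset G α ω := hY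
      set c : G → ℕ := fun g =>
        ((X.toFinset ×ˢ Y.toFinset).filter fun p => p.1 * p.2 = g).card with hc
      set cls : G → Set G := fun g =>
        {g' : G | (g' : K) • α ∈
          MulAction.orbit (MulAction.stabilizer K α) ((g : K) • α)} with hcls
      have hclsY : ∀ g : G, cls g = SchurAux.Yset G α ((g : K) • α) := fun g => rfl
      suffices hfin : (∑ x ∈ X.toFinset, MonoidAlgebra.single x (1 : ℤ) : MonoidAlgebra ℤ G)
            * (∑ y ∈ Y.toFinset, MonoidAlgebra.single y (1 : ℤ) : MonoidAlgebra ℤ G)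
            ∈ Submodule.span ℤ gens by
        exact hfin
      have expand : (∑ x ∈ X.toFinset, MonoidAlgebra.single x (1 : ℤ) : MonoidAlgebra ℤ G)
            * (∑ y ∈ Y.toFinset, MonoidAlgebra.single y (1 : ℤ) : MonoidAlgebra ℤ G)
          = (∑ p ∈ X.toFinset ×ˢ Y.toFinset,
              MonoidAlgebra.single (p.1 * p.2) (1 : ℤ) : MonoidAlgebra ℤ G) := by
        rw [Finset.sum_mul_sum, Finset.sum_product]
        refine Finset.sum_congr rfl fun x _ => Finset.sum_congr rfl fun y _ => ?_
        exact (MonoidAlgebra.single_mul_single _ _ _ _).trans (by rw [one_mul])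
      have fib : (∑ p ∈ X.toFinset ×ˢ Y.toFinset,
              MonoidAlgebra.single (p.1 * p.2) (1 : ℤ) : MonoidAlgebra ℤ G)
          = (∑ g : G, c g • MonoidAlgebra.single g (1 : ℤ) : MonoidAlgebra ℤ G) := by
        rw [← Finset.sum_fiberwise (X.toFinset ×ˢ Y.toFinset) (fun p => p.1 * p.2)
          (fun p => (MonoidAlgebra.single (p.1 * p.2) (1 : ℤ) : MonoidAlgebra ℤ G))]
        refine Finset.sum_congr rfl fun g _ => ?_
        calc (∑ p ∈ (X.toFinset ×ˢ Y.toFinset).filter (fun p => p.1 * p.2 = g),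
                MonoidAlgebra.single (p.1 * p.2) (1 : ℤ) : MonoidAlgebra ℤ G)
            = (∑ _p ∈ (X.toFinset ×ˢ Y.toFinset).filter (fun p => p.1 * p.2 = g),
                MonoidAlgebra.single g (1 : ℤ) : MonoidAlgebra ℤ G) :=
              Finset.sum_congr rfl (fun p hp => by rw [(Finset.mem_filter.mp hp).2])
          _ = c g • (MonoidAlgebra.single g (1 : ℤ) : MonoidAlgebra ℤ G) := Finset.sum_const _
      have grp : (∑ g : G, c g • MonoidAlgebra.single g (1 : ℤ) : MonoidAlgebra ℤ G)
          = ∑ Z ∈ Finset.univ.image cls,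
              (∑ g ∈ Finset.univ.filter (fun g => cls g = Z),
                c g • MonoidAlgebra.single g (1 : ℤ) : MonoidAlgebra ℤ G) :=
        (Finset.sum_fiberwise_of_maps_to
          (fun g _ => Finset.mem_image_of_mem cls (Finset.mem_univ g)) _).symm
      rw [expand, fib, grp]
      refine Submodule.sum_mem _ fun Z hZ => ?_
      obtain ⟨g₀, -, rfl⟩ := Finset.mem_image.mp hZ
      have hfil : Finset.univ.filter (fun g => cls g = cls g₀) = (cls g₀).toFinset := by
        ext g
        simp only [Finset.mem_filter, Finset.mem_univ, true_and, Set.mem_toFinset]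
        constructor
        · intro he
          rw [← he]
          exact SchurAux.mem_Yset_self g
        · intro hg
          rw [hclsY g, hclsY g₀]
          exact SchurAux.class_eq hg
      have hconst : ∀ g ∈ (cls g₀).toFinset, c g = c g₀ := by
        intro g hg
        rw [Set.mem_toFinset] at hg
        obtain ⟨kk, hkk⟩ := hg
        have hkk' : (kk : K) • ((g₀ : K) • α) = (g : K) • α := hkk
        exact (SchurAux.card_fiber_eq hreg hX' hY' kk.2 hkk').symm
      rw [hfil, Finset.sum_congr rfl (fun g hg => by rw [hconst g hg]), ← Finset.smul_sum]
      refine nsmul_mem (Submodule.subset_span ?_) _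
      exact ⟨cls g₀, ⟨(g₀ : K) • α, rfl⟩, rfl⟩
    have h1 : a * b ∈ Submodule.span ℤ gens * Submodule.span ℤ gens :=
      Submodule.mul_mem_mul ha hb
    rw [Submodule.span_mul_span] at h1
    refine Submodule.span_le.mpr ?_ h1
    rintro u hu
    rw [Set.mem_mul] at hu
    obtain ⟨v, hv, w, hw, rfl⟩ := hu
    exact key v hv w hw
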